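/- Let p be an odd prime. The kernel of the algebra homomorphism T': F_2 D_{2p} → F_2 ⊕ ⨁_{i=1}^k M_2(F_2(γ_i + γ_i^{-1})) (induced by the trivial representation and the 2-dimensional representations a ↦ [[0,1],[1,γ_i+γ_i^{-1}]], b ↦ [[1,0],[γ_i+γ_i^{-1},1]], where γ_1,…,γ_k exhaust the irreducible factors of Φ_p over F_2 up to inversion) is the one-dimensional ideal F_2·Ĝ spanned by the sum of all group elements. -/

import Mathlib

open MonoidAlgebra IntermediateField Polynomial Matrix

lemma stmt12_zmod_sum {p : ℕ} [NeZero p] {M : Type*} [AddCommMonoid M] (f : ℕ → M) :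
    ∑ j : ZMod p, f j.val = ∑ n ∈ Finset.range p, f n := by
  refine Finset.sum_nbij' (fun j => j.val) (fun n => (n : ZMod p)) ?_ ?_ ?_ ?_ ?_
  · intro a _; exact Finset.mem_range.mpr (ZMod.val_lt a)
  · intro a _; exact Finset.mem_univ _
  · intro a _; exact ZMod.natCast_rightInverse a
  · intro a ha; exact ZMod.val_cast_of_lt (Finset.mem_range.mp ha)
  · intro a _; rfl

lemma stmt12_cast_p {p : ℕ} (hodd : Odd p) : ((p : ZMod 2)) = 1 := by
  obtain ⟨m, hm⟩ := hodd
  subst hm; push_cast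
  rw [show ((2:ZMod 2)) = 0 from rfl, zero_mul, zero_add]

lemma stmt12_poly {p : ℕ} (hp : p.Prime) (hodd : Odd p) [NeZero p]
    {k : ℕ} {γ : Fin k → AlgebraicClosure (ZMod 2)}
    (hexh : ∀ ζ : AlgebraicClosure (ZMod 2), IsPrimitiveRoot ζ p →
      ∃ i, minpoly (ZMod 2) ζ = minpoly (ZMod 2) (γ i) ∨
        minpoly (ZMod 2) ζ = minpoly (ZMod 2) (γ i)⁻¹)
    (c : ZMod p → ZMod 2)
    (hvan : ∀ i, (∑ j : ZMod p, algebraMap (ZMod 2) (AlgebraicClosure (ZMod 2)) (c j) * (γ i) ^ j.val = 0) ∧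
                 (∑ j : ZMod p, algebraMap (ZMod 2) (AlgebraicClosure (ZMod 2)) (c j) * ((γ i)⁻¹) ^ j.val = 0)) :
    ∀ j, c j = c 0 := by
  haveI : Fact p.Prime := ⟨hp⟩
  classical
  set K := AlgebraicClosure (ZMod 2)
  set C : Polynomial (ZMod 2) := ∑ j : ZMod p, Polynomial.C (c j) * Polynomial.X ^ j.val with hCdef
  have hval_inj : Function.Injective (ZMod.val : ZMod p → ℕ) := by
    intro a b hab
    have := congrArg (fun n : ℕ => (n : ZMod p)) hab
    simpa [ZMod.natCast_rightInverse a, ZMod.natCast_rightInverse b] using this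
  have hcoeff : ∀ j : ZMod p, C.coeff j.val = c j := by
    intro j
    rw [hCdef, Polynomial.finset_sum_coeff]
    rw [Finset.sum_eq_single j]
    · simp
    · intro b _ hb
      have : b.val ≠ j.val := fun h => hb (hval_inj h)
      simp [Polynomial.coeff_C_mul, Polynomial.coeff_X_pow, Ne.symm this]
    · simp
  have haev : ∀ z : K, Polynomial.aeval z C = ∑ j : ZMod p, algebraMap (ZMod 2) K (c j) * z ^ j.val := by
    intro z
    rw [hCdef, _root_.map_sum]
    refine Finset.sum_congr rfl fun j _ => ?_
    simp
  have hprim : ∀ ζ : K, IsPrimitiveRoot ζ p → Polynomial.aeval ζ C = 0 := by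
    intro ζ hζ
    obtain ⟨i, hi | hi⟩ := hexh ζ hζ
    · have hdvd : minpoly (ZMod 2) ζ ∣ C := by
        rw [hi]; exact minpoly.dvd _ _ (by rw [haev]; exact (hvan i).1)
      obtain ⟨q, hq⟩ := hdvd
      rw [hq, _root_.map_mul, minpoly.aeval, zero_mul]
    · have hdvd : minpoly (ZMod 2) ζ ∣ C := by
        rw [hi]; exact minpoly.dvd _ _ (by rw [haev]; exact (hvan i).2)
      obtain ⟨q, hq⟩ := hdvd
      rw [hq, _root_.map_mul, minpoly.aeval, zero_mul]
  by_cases hC0 : C = 0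
  · intro j
    rw [← hcoeff j, ← hcoeff 0, hC0]
    simp
  have hpK : (p : K) ≠ 0 := by
    have h1 : ((p : ZMod 2)) = 1 := stmt12_cast_p hodd
    rw [← map_natCast (algebraMap (ZMod 2) K) p, h1, _root_.map_one]
    exact one_ne_zero
  haveI : NeZero (p : K) := ⟨hpK⟩
  have hdegcyc : (cyclotomic p K).degree ≠ 0 := by
    have h1 : p - 1 ≠ 0 := by have := hp.two_le; omega
    rw [degree_cyclotomic, Nat.totient_prime hp]
    exact fun h => h1 (by exact_mod_cast h)
  obtain ⟨z, hz⟩ := IsAlgClosed.exists_root (cyclotomic p K) hdegcyc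
  have hzprim : IsPrimitiveRoot z p := (Polynomial.isRoot_cyclotomic_iff).mp hz
  have hmapC0 : C.map (algebraMap (ZMod 2) K) ≠ 0 :=
    (Polynomial.map_ne_zero_iff (algebraMap (ZMod 2) K).injective).mpr hC0
  have hsub : (primitiveRoots p K).val ≤ (C.map (algebraMap (ZMod 2) K)).roots := by
    rw [Multiset.le_iff_count]
    intro a
    by_cases ha : a ∈ primitiveRoots p K
    · have hprima : IsPrimitiveRoot a p := (mem_primitiveRoots (Nat.pos_of_ne_zero (NeZero.ne p))).mp ha
      have hroot : (C.map (algebraMap (ZMod 2) K)).IsRoot a := by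
        rw [Polynomial.IsRoot, Polynomial.eval_map, ← Polynomial.aeval_def]
        exact hprim a hprima
      have hmem : a ∈ (C.map (algebraMap (ZMod 2) K)).roots :=
        Polynomial.mem_roots'.mpr ⟨hmapC0, hroot⟩
      calc Multiset.count a (primitiveRoots p K).val = 1 :=
            Multiset.count_eq_one_of_mem (primitiveRoots p K).nodup ha
        _ ≤ _ := Multiset.one_le_count_iff_mem.mpr hmem
    · rw [Multiset.count_eq_zero_of_notMem ha]
      exact Nat.zero_le _
  have hdvdK : cyclotomic p K ∣ C.map (algebraMap (ZMod 2) K) := by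
    rw [cyclotomic_eq_prod_X_sub_primitiveRoots hzprim]
    have := Multiset.prod_dvd_prod_of_le (Multiset.map_le_map (f := fun a => X - Polynomial.C a) hsub)
    calc ∏ μ ∈ primitiveRoots p K, (X - Polynomial.C μ)
        = ((primitiveRoots p K).val.map fun a => X - Polynomial.C a).prod := rfl
      _ ∣ ((C.map (algebraMap (ZMod 2) K)).roots.map fun a => X - Polynomial.C a).prod := this
      _ ∣ _ := Polynomial.prod_multiset_X_sub_C_dvd _
  have hdvd : cyclotomic p (ZMod 2) ∣ C := by
    have := hdvdK
    rwa [← Polynomial.map_cyclotomic p (algebraMap (ZMod 2) K),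
      Polynomial.map_dvd_map' ] at this
  have hdeg : C.degree ≤ ((p - 1 : ℕ) : WithBot ℕ) := by
    rw [hCdef]
    refine (Polynomial.degree_sum_le _ _).trans ?_
    refine Finset.sup_le fun j _ => ?_
    refine (Polynomial.degree_mul_le _ _).trans ?_
    refine le_trans (add_le_add Polynomial.degree_C_le (le_of_eq (Polynomial.degree_X_pow _))) ?_
    rw [zero_add]
    exact Nat.cast_le.mpr (Nat.le_pred_of_lt (ZMod.val_lt j))
  obtain ⟨q, hq⟩ := hdvd
  have hq0 : q ≠ 0 := by rintro rfl; simp at hq; exact hC0 hq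
  have hnat : C.natDegree ≤ p - 1 := Polynomial.natDegree_le_iff_degree_le.mpr hdeg
  have hmulnat : C.natDegree = (cyclotomic p (ZMod 2)).natDegree + q.natDegree := by
    rw [hq]; exact Polynomial.natDegree_mul (Polynomial.cyclotomic_ne_zero p _) hq0
  rw [Polynomial.natDegree_cyclotomic, Nat.totient_prime hp] at hmulnat
  have hqnat : q.natDegree = 0 := by omega
  have hqC : q = Polynomial.C (q.coeff 0) :=
    Polynomial.eq_C_of_natDegree_le_zero (le_of_eq hqnat)
  have hcyccoeff : ∀ n, n < p → (cyclotomic p (ZMod 2)).coeff n = 1 := by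
    intro n hn
    rw [cyclotomic_prime, Polynomial.finset_sum_coeff]
    rw [Finset.sum_eq_single n]
    · simp
    · intro b _ hb; simp [Polynomial.coeff_X_pow, Ne.symm hb]
    · intro h; exact absurd (Finset.mem_range.mpr hn) h
  intro j
  have hcj : ∀ j' : ZMod p, c j' = q.coeff 0 := by
    intro j'
    rw [← hcoeff j', hq, hqC, Polynomial.coeff_mul_C, hcyccoeff _ (ZMod.val_lt j'), one_mul,
      Polynomial.coeff_C_zero]
  rw [hcj j, hcj 0]

lemma stmt12_AP {K : Type*} [Field K] (h2 : (2:K) = 0) {g : K} (hg0 : g ≠ 0) :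
    (!![0,1;1,g+g⁻¹] : Matrix (Fin 2) (Fin 2) K) * !![1,1;g,g⁻¹] =
    !![1,1;g,g⁻¹] * !![g,0;0,g⁻¹] := by
  have hgg : g * g⁻¹ = 1 := mul_inv_cancel₀ hg0
  ext i j
  fin_cases i <;> fin_cases j <;>
    simp [Matrix.mul_apply, Fin.sum_univ_two] <;>
    linear_combination h2 + hgg

lemma stmt12_BP {K : Type*} [Field K] (h2 : (2:K) = 0) {g : K} :
    (!![1,0;g+g⁻¹,1] : Matrix (Fin 2) (Fin 2) K) * !![1,1;g,g⁻¹] =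
    !![1,1;g,g⁻¹] * !![0,1;1,0] := by
  ext i j
  fin_cases i <;> fin_cases j <;>
    simp [Matrix.mul_apply, Fin.sum_univ_two]
  · linear_combination g * h2
  · linear_combination g⁻¹ * h2

lemma stmt12_APn {K : Type*} [Field K] (h2 : (2:K) = 0) {g : K} (hg0 : g ≠ 0) (n : ℕ) :
    (!![0,1;1,g+g⁻¹] : Matrix (Fin 2) (Fin 2) K) ^ n * !![1,1;g,g⁻¹] =
    !![1,1;g,g⁻¹] * !![g^n,0;0,(g⁻¹)^n] := by
  induction n with
  | zero => simp [Matrix.one_fin_two]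
  | succ n ih =>
      rw [pow_succ, mul_assoc, stmt12_AP h2 hg0, ← mul_assoc, ih, mul_assoc]
      congr 1
      ext i j
      fin_cases i <;> fin_cases j <;>
        simp [Matrix.mul_apply, Fin.sum_univ_two, pow_succ]

lemma stmt12_dsum {n : ℕ} [NeZero n] {M : Type*} [AddCommMonoid M] (f : DihedralGroup n → M) :
    ∑ g : DihedralGroup n, f g =
      ∑ j : ZMod n, f (DihedralGroup.r j) + ∑ j : ZMod n, f (DihedralGroup.sr j) := by
  let e : (ZMod n) ⊕ (ZMod n) ≃ DihedralGroup n :=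
    { toFun := Sum.elim DihedralGroup.r DihedralGroup.sr
      invFun := fun g => match g with
        | .r j => Sum.inl j
        | .sr j => Sum.inr j
      left_inv := by rintro (j|j) <;> rfl
      right_inv := by rintro (j|j) <;> rfl }
  rw [← Equiv.sum_comp e f, Fintype.sum_sum_type]
  rfl

lemma stmt12_expand {p : ℕ} [NeZero p] {R : Type*} [Ring R] [Algebra (ZMod 2) R]
    (T : MonoidAlgebra (ZMod 2) (DihedralGroup p) →ₐ[ZMod 2] R)
    (x : MonoidAlgebra (ZMod 2) (DihedralGroup p)) :
    T x = ∑ gg : DihedralGroup p, x.coeff gg • T (MonoidAlgebra.of (ZMod 2) (DihedralGroup p) gg) := by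
  have hx : x = ∑ gg : DihedralGroup p, x.coeff gg • MonoidAlgebra.of (ZMod 2) (DihedralGroup p) gg := by
    ext h
    rw [MonoidAlgebra.coeff_sum, Finsupp.finset_sum_apply]
    classical
    rw [Finset.sum_eq_single h]
    · simp [MonoidAlgebra.of_apply, MonoidAlgebra.single_apply]
    · intro b _ hb
      simp [MonoidAlgebra.of_apply, MonoidAlgebra.single_apply, hb]
    · simp
  conv_lhs => rw [hx]
  rw [_root_.map_sum]
  exact Finset.sum_congr rfl fun gg _ => by rw [_root_.map_smul]


lemma stmt12_entries {K : Type*} [CommRing K] {a b c d : K}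
    (h : (!![a,b;c,d] : Matrix (Fin 2) (Fin 2) K) = 0) : a = 0 ∧ b = 0 ∧ c = 0 ∧ d = 0 := by
  refine ⟨congrFun (congrFun h 0) 0, congrFun (congrFun h 0) 1,
    congrFun (congrFun h 1) 0, congrFun (congrFun h 1) 1⟩

lemma stmt12_entries' {K : Type*} [CommRing K] {a b c d : K}
    (ha : a = 0) (hb : b = 0) (hc : c = 0) (hd : d = 0) :
    (!![a,b;c,d] : Matrix (Fin 2) (Fin 2) K) = 0 := by
  subst ha hb hc hd
  ext i j
  fin_cases i <;> fin_cases j <;> simp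

lemma stmt12_sumQ {p : ℕ} [NeZero p] {K : Type*} [Field K] [Algebra (ZMod 2) K] (g : K)
    (c d : ZMod p → ZMod 2) :
    ((∑ j : ZMod p, c j • (!![g^(j.val),0;0,(g⁻¹)^(j.val)] : Matrix (Fin 2) (Fin 2) K))
      + ∑ j : ZMod p, d j • (!![0,(g⁻¹)^(j.val); g^(j.val),0] : Matrix (Fin 2) (Fin 2) K))
    = !![∑ j : ZMod p, algebraMap (ZMod 2) K (c j) * g^(j.val),
         ∑ j : ZMod p, algebraMap (ZMod 2) K (d j) * (g⁻¹)^(j.val);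
         ∑ j : ZMod p, algebraMap (ZMod 2) K (d j) * g^(j.val),
         ∑ j : ZMod p, algebraMap (ZMod 2) K (c j) * (g⁻¹)^(j.val)] := by
  ext a b
  fin_cases a <;> fin_cases b <;>
    simp only [Matrix.add_apply, Matrix.sum_apply, Matrix.smul_apply] <;>
    simp [Algebra.smul_def]

noncomputable def stmt12Qm {p : ℕ} [NeZero p] {k : ℕ} (γ : Fin k → AlgebraicClosure (ZMod 2))
    (x : MonoidAlgebra (ZMod 2) (DihedralGroup p)) (i : Fin k) :
    Matrix (Fin 2) (Fin 2) (AlgebraicClosure (ZMod 2)) :=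
  !![∑ j : ZMod p, algebraMap (ZMod 2) (AlgebraicClosure (ZMod 2)) (x.coeff (DihedralGroup.r j)) * (γ i) ^ j.val,
     ∑ j : ZMod p, algebraMap (ZMod 2) (AlgebraicClosure (ZMod 2)) (x.coeff (DihedralGroup.sr j)) * ((γ i)⁻¹) ^ j.val;
     ∑ j : ZMod p, algebraMap (ZMod 2) (AlgebraicClosure (ZMod 2)) (x.coeff (DihedralGroup.sr j)) * (γ i) ^ j.val,
     ∑ j : ZMod p, algebraMap (ZMod 2) (AlgebraicClosure (ZMod 2)) (x.coeff (DihedralGroup.r j)) * ((γ i)⁻¹) ^ j.val]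

set_option maxHeartbeats 1000000 in
theorem stmt12 (p : ℕ) (hp : p.Prime) (hodd : Odd p) [NeZero p]
    (k : ℕ) (γ : Fin k → AlgebraicClosure (ZMod 2))
    (hγ : ∀ i, IsPrimitiveRoot (γ i) p)
    (hdist : ∀ i j, i ≠ j → minpoly (ZMod 2) (γ i) ≠ minpoly (ZMod 2) (γ j))
    (hdist' : ∀ i j, i ≠ j → minpoly (ZMod 2) (γ i) ≠ minpoly (ZMod 2) (γ j)⁻¹)
    (hexh : ∀ ζ : AlgebraicClosure (ZMod 2), IsPrimitiveRoot ζ p →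
      ∃ i, minpoly (ZMod 2) ζ = minpoly (ZMod 2) (γ i) ∨
        minpoly (ZMod 2) ζ = minpoly (ZMod 2) (γ i)⁻¹)
    (T' : MonoidAlgebra (ZMod 2) (DihedralGroup p) →ₐ[ZMod 2]
      (ZMod 2) × ((i : Fin k) → Matrix (Fin 2) (Fin 2) ((ZMod 2)⟮γ i + (γ i)⁻¹⟯)))
    (hTa : T' (MonoidAlgebra.of (ZMod 2) (DihedralGroup p) (DihedralGroup.r 1)) =
      (1, fun i => !![0, 1; 1, IntermediateField.AdjoinSimple.gen (ZMod 2) (γ i + (γ i)⁻¹)]))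
    (hTb : T' (MonoidAlgebra.of (ZMod 2) (DihedralGroup p) (DihedralGroup.sr 0)) =
      (1, fun i => !![1, 0; IntermediateField.AdjoinSimple.gen (ZMod 2) (γ i + (γ i)⁻¹), 1])) :
    RingHom.ker T'.toRingHom =
      Ideal.span {∑ g : DihedralGroup p, MonoidAlgebra.of (ZMod 2) (DihedralGroup p) g} := by
  classical
  haveI : Fact p.Prime := ⟨hp⟩
  have h2K : (2 : (AlgebraicClosure (ZMod 2))) = 0 := by
    have h : ((2:ℕ) : (AlgebraicClosure (ZMod 2))) = 0 := by
      rw [← map_natCast (algebraMap (ZMod 2) (AlgebraicClosure (ZMod 2))) 2,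
        show ((2:ℕ) : ZMod 2) = 0 by decide, map_zero]
    simpa using h
  have hp3 : 2 < p := by
    obtain ⟨m, hm⟩ := hodd
    have := hp.two_le
    omega
  have hγ0 : ∀ i, γ i ≠ 0 := fun i => (hγ i).ne_zero (NeZero.ne p)
  have hγinv : ∀ i, (γ i)⁻¹ ≠ γ i := by
    intro i h
    have h2 : γ i ^ 2 = 1 := by
      rw [pow_two]
      nth_rewrite 2 [← h]
      exact mul_inv_cancel₀ (hγ0 i)
    exact (hγ i).pow_ne_one_of_pos_of_lt (by norm_num) hp3 h2
  let S : DihedralGroup p →* (ZMod 2) × ((i : Fin k) → Matrix (Fin 2) (Fin 2) ((ZMod 2)⟮γ i + (γ i)⁻¹⟯)) :=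
    T'.toRingHom.toMonoidHom.comp (MonoidAlgebra.of (ZMod 2) (DihedralGroup p))
  have hSdef : ∀ gg, S gg = T' (MonoidAlgebra.of (ZMod 2) (DihedralGroup p) gg) := fun _ => rfl
  let P : (i : Fin k) → Matrix (Fin 2) (Fin 2) (AlgebraicClosure (ZMod 2)) := fun i => !![1,1; γ i, (γ i)⁻¹]
  have hPunit : ∀ i, IsUnit (P i) := by
    intro i
    rw [Matrix.isUnit_iff_isUnit_det, Matrix.det_fin_two_of]
    refine isUnit_iff_ne_zero.mpr ?_
    have : (γ i)⁻¹ - γ i ≠ 0 := sub_ne_zero.mpr (fun h => hγinv i (by rw [h]))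
    simpa using this
  let φ : (i : Fin k) → ((ZMod 2)⟮γ i + (γ i)⁻¹⟯ →ₐ[ZMod 2] (AlgebraicClosure (ZMod 2))) :=
    fun i => IsScalarTower.toAlgHom (ZMod 2) ((ZMod 2)⟮γ i + (γ i)⁻¹⟯) (AlgebraicClosure (ZMod 2))
  have hφgen : ∀ i, φ i (AdjoinSimple.gen (ZMod 2) (γ i + (γ i)⁻¹)) = γ i + (γ i)⁻¹ :=
    fun i => AdjoinSimple.algebraMap_gen _ _
  have hφinj : ∀ i, Function.Injective (φ i) := fun i => (φ i).toRingHom.injective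
  let Ψ : (i : Fin k) → (Matrix (Fin 2) (Fin 2) ((ZMod 2)⟮γ i + (γ i)⁻¹⟯) →ₐ[ZMod 2] Matrix (Fin 2) (Fin 2) (AlgebraicClosure (ZMod 2))) :=
    fun i => (φ i).mapMatrix
  let Amat : (i : Fin k) → Matrix (Fin 2) (Fin 2) (AlgebraicClosure (ZMod 2)) := fun i => !![0,1;1, γ i + (γ i)⁻¹]
  let Bmat : (i : Fin k) → Matrix (Fin 2) (Fin 2) (AlgebraicClosure (ZMod 2)) := fun i => !![1,0; γ i + (γ i)⁻¹, 1]
  have hΨA : ∀ i, Ψ i ((S (DihedralGroup.r 1)).2 i) = Amat i := by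
    intro i
    rw [hSdef, hTa]
    ext a b
    fin_cases a <;> fin_cases b <;>
      simp [Ψ, Amat, AlgHom.mapMatrix_apply, Matrix.map_apply, hφgen]
  have hΨB : ∀ i, Ψ i ((S (DihedralGroup.sr 0)).2 i) = Bmat i := by
    intro i
    rw [hSdef, hTb]
    ext a b
    fin_cases a <;> fin_cases b <;>
      simp [Ψ, Bmat, AlgHom.mapMatrix_apply, Matrix.map_apply, hφgen]
  have hrj : ∀ j : ZMod p, DihedralGroup.r j = DihedralGroup.r (1 : ZMod p) ^ j.val := by
    intro j
    rw [DihedralGroup.r_one_pow]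
    exact congrArg _ (ZMod.natCast_rightInverse j).symm
  have hsrj : ∀ j : ZMod p, DihedralGroup.sr j = DihedralGroup.sr 0 * DihedralGroup.r j := by
    intro j
    rw [DihedralGroup.sr_mul_r, zero_add]
  have hΨr : ∀ i (j : ZMod p), Ψ i ((S (DihedralGroup.r j)).2 i) = Amat i ^ j.val := by
    intro i j
    rw [hrj j, _root_.map_pow, Prod.pow_snd, Pi.pow_apply, _root_.map_pow, hΨA]
  have hΨsr : ∀ i (j : ZMod p), Ψ i ((S (DihedralGroup.sr j)).2 i) = Bmat i * Amat i ^ j.val := by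
    intro i j
    rw [hsrj j, _root_.map_mul, Prod.snd_mul, Pi.mul_apply, _root_.map_mul, hΨB, hΨr]
  have hS1 : ∀ gg, (S gg).1 = 1 := by
    intro gg
    have hr1 : (S (DihedralGroup.r 1)).1 = 1 := by rw [hSdef, hTa]
    have hsr0 : (S (DihedralGroup.sr 0)).1 = 1 := by rw [hSdef, hTb]
    cases gg with
    | r j => rw [hrj j, _root_.map_pow, Prod.pow_fst, hr1, one_pow]
    | sr j => rw [hsrj j, _root_.map_mul, Prod.fst_mul, hsr0, hrj j, _root_.map_pow, Prod.pow_fst, hr1,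
        one_pow, one_mul]
  have hswapD : ∀ (g : (AlgebraicClosure (ZMod 2))) (n : ℕ), (!![(0:(AlgebraicClosure (ZMod 2))),1;1,0] * !![g^n,0;0,(g⁻¹)^n]) = !![0,(g⁻¹)^n; g^n, 0] := by
    intro g n
    ext a b
    fin_cases a <;> fin_cases b <;> simp [Matrix.mul_apply, Fin.sum_univ_two]
  have hconj_r : ∀ i (j : ZMod p),
      Ψ i ((S (DihedralGroup.r j)).2 i) * P i
        = P i * !![γ i ^ j.val, 0; 0, ((γ i)⁻¹) ^ j.val] := by
    intro i j
    rw [hΨr]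
    exact stmt12_APn h2K (hγ0 i) j.val
  have hconj_sr : ∀ i (j : ZMod p),
      Ψ i ((S (DihedralGroup.sr j)).2 i) * P i
        = P i * !![0, ((γ i)⁻¹) ^ j.val; γ i ^ j.val, 0] := by
    intro i j
    rw [hΨsr, mul_assoc, stmt12_APn h2K (hγ0 i), ← mul_assoc, stmt12_BP h2K, mul_assoc, hswapD]
  have hfst : ∀ x, (T' x).1 = ∑ gg, x.coeff gg := by
    intro x
    rw [stmt12_expand T' x, Prod.fst_sum]
    refine Finset.sum_congr rfl fun gg _ => ?_
    rw [Prod.smul_fst, ← hSdef, hS1, smul_eq_mul, mul_one]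
  have hsnd : ∀ x i, Ψ i ((T' x).2 i) * P i = P i * stmt12Qm γ x i := by
    intro x i
    rw [stmt12_expand T' x]
    have h1 : (∑ gg, x.coeff gg • T' (MonoidAlgebra.of (ZMod 2) (DihedralGroup p) gg)).2 i
        = ∑ gg, x.coeff gg • (S gg).2 i := by
      rw [Prod.snd_sum, Finset.sum_apply]
      refine Finset.sum_congr rfl fun gg _ => ?_
      rw [← hSdef, Prod.smul_snd, Pi.smul_apply]
    rw [h1, _root_.map_sum, Finset.sum_mul]
    have h2 : ∀ gg, Ψ i (x.coeff gg • (S gg).2 i) * P i = x.coeff gg • (Ψ i ((S gg).2 i) * P i) := by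
      intro gg
      rw [_root_.map_smul, smul_mul_assoc]
    rw [Finset.sum_congr rfl (fun gg _ => h2 gg)]
    rw [stmt12_dsum (f := fun gg => x.coeff gg • (Ψ i ((S gg).2 i) * P i))]
    have h3 : ∀ j : ZMod p, x.coeff (DihedralGroup.r j) • (Ψ i ((S (DihedralGroup.r j)).2 i) * P i)
        = P i * (x.coeff (DihedralGroup.r j) • !![γ i ^ j.val, 0; 0, ((γ i)⁻¹) ^ j.val]) := by
      intro j
      rw [hconj_r, mul_smul_comm]
    have h4 : ∀ j : ZMod p, x.coeff (DihedralGroup.sr j) • (Ψ i ((S (DihedralGroup.sr j)).2 i) * P i)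
        = P i * (x.coeff (DihedralGroup.sr j) • !![0, ((γ i)⁻¹) ^ j.val; γ i ^ j.val, 0]) := by
      intro j
      rw [hconj_sr, mul_smul_comm]
    rw [Finset.sum_congr rfl (fun j _ => h3 j), Finset.sum_congr rfl (fun j _ => h4 j),
      ← Finset.mul_sum, ← Finset.mul_sum, ← mul_add,
      stmt12_sumQ (γ i) (fun j => x.coeff (DihedralGroup.r j)) (fun j => x.coeff (DihedralGroup.sr j))]
    rfl
  have hchar : ∀ x, T' x = 0 ↔ ((∑ gg, x.coeff gg) = 0 ∧ ∀ i, stmt12Qm γ x i = 0) := by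
    intro x
    constructor
    · intro hx
      constructor
      · rw [← hfst, hx]; rfl
      · intro i
        have h0 : Ψ i ((T' x).2 i) * P i = 0 := by
          rw [hx]
          show Ψ i 0 * P i = 0
          rw [_root_.map_zero, zero_mul]
        have hPQ := hsnd x i
        rw [h0] at hPQ
        exact (hPunit i).mul_left_cancel
          (show P i * stmt12Qm γ x i = P i * 0 by rw [mul_zero]; exact hPQ.symm)
    · rintro ⟨h1, h2⟩
      have hfst0 : (T' x).1 = 0 := by rw [hfst, h1]
      have hsnd0 : (T' x).2 = 0 := by
        funext i
        have h3 : Ψ i ((T' x).2 i) * P i = 0 := by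
          rw [hsnd x i, h2 i, mul_zero]
        have h4 : Ψ i ((T' x).2 i) = 0 :=
          (hPunit i).mul_right_cancel (by rw [zero_mul]; exact h3)
        refine Matrix.ext fun a b => ?_
        apply hφinj i
        have h5 := congrFun (congrFun h4 a) b
        simpa [Ψ, AlgHom.mapMatrix_apply, Matrix.map_apply, Matrix.zero_apply] using h5
      have hxx : T' x = ((T' x).1, (T' x).2) := rfl
      rw [hxx, hfst0, hsnd0]
      rfl
  have hGc : ∀ gg, (∑ g : DihedralGroup p, MonoidAlgebra.of (ZMod 2) (DihedralGroup p) g).coeff gg = 1 := by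
    intro gg
    rw [MonoidAlgebra.coeff_sum, Finsupp.finset_sum_apply]
    rw [Finset.sum_eq_single gg]
    · simp [MonoidAlgebra.of_apply, MonoidAlgebra.single_apply]
    · intro b _ hb
      simp [MonoidAlgebra.of_apply, MonoidAlgebra.single_apply, hb]
    · simp
  apply le_antisymm
  · intro x hx
    rw [RingHom.mem_ker] at hx
    have hx' : T' x = 0 := hx
    rw [hchar] at hx'
    obtain ⟨hsum, hQ⟩ := hx'
    set c : ZMod p → ZMod 2 := fun j => x.coeff (DihedralGroup.r j) with hc
    set d : ZMod p → ZMod 2 := fun j => x.coeff (DihedralGroup.sr j) with hd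
    have hQe : ∀ i, (∑ j : ZMod p, algebraMap (ZMod 2) (AlgebraicClosure (ZMod 2)) (c j) * (γ i) ^ j.val = 0) ∧
        (∑ j : ZMod p, algebraMap (ZMod 2) (AlgebraicClosure (ZMod 2)) (c j) * ((γ i)⁻¹) ^ j.val = 0) := by
      intro i
      obtain ⟨h00, h01, h10, h11⟩ := stmt12_entries (hQ i)
      exact ⟨h00, h11⟩
    have hQd : ∀ i, (∑ j : ZMod p, algebraMap (ZMod 2) (AlgebraicClosure (ZMod 2)) (d j) * (γ i) ^ j.val = 0) ∧
        (∑ j : ZMod p, algebraMap (ZMod 2) (AlgebraicClosure (ZMod 2)) (d j) * ((γ i)⁻¹) ^ j.val = 0) := by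
      intro i
      obtain ⟨h00, h01, h10, h11⟩ := stmt12_entries (hQ i)
      exact ⟨h10, h01⟩
    have hcconst := stmt12_poly hp hodd hexh c hQe
    have hdconst := stmt12_poly hp hodd hexh d hQd
    have hsum' : c 0 + d 0 = 0 := by
      rw [stmt12_dsum (f := fun gg => x.coeff gg)] at hsum
      have hc1 : ∑ j : ZMod p, x.coeff (DihedralGroup.r j) = c 0 := by
        calc ∑ j : ZMod p, x.coeff (DihedralGroup.r j) = ∑ _j : ZMod p, c 0 :=
              Finset.sum_congr rfl fun j _ => hcconst j
          _ = (p : ZMod 2) * c 0 := by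
              rw [Finset.sum_const, Finset.card_univ, ZMod.card, nsmul_eq_mul]
          _ = c 0 := by rw [stmt12_cast_p hodd, one_mul]
      have hd1 : ∑ j : ZMod p, x.coeff (DihedralGroup.sr j) = d 0 := by
        calc ∑ j : ZMod p, x.coeff (DihedralGroup.sr j) = ∑ _j : ZMod p, d 0 :=
              Finset.sum_congr rfl fun j _ => hdconst j
          _ = (p : ZMod 2) * d 0 := by
              rw [Finset.sum_const, Finset.card_univ, ZMod.card, nsmul_eq_mul]
          _ = d 0 := by rw [stmt12_cast_p hodd, one_mul]
      rw [hc1, hd1] at hsum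
      exact hsum
    have hd0 : d 0 = c 0 := by
      have h := eq_neg_of_add_eq_zero_right hsum'
      rw [h]
      exact (CharTwo.neg_eq _)
    have hxeq : x = c 0 • (∑ g : DihedralGroup p, MonoidAlgebra.of (ZMod 2) (DihedralGroup p) g) := by
      ext gg
      rw [MonoidAlgebra.coeff_smul_apply, hGc, smul_eq_mul, mul_one]
      cases gg with
      | r j => exact hcconst j
      | sr j => rw [show x.coeff (DihedralGroup.sr j) = d j from rfl, hdconst j, hd0]
    rw [Ideal.mem_span_singleton']
    refine ⟨algebraMap (ZMod 2) _ (c 0), ?_⟩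
    rw [← Algebra.smul_def, ← hxeq]
  · rw [Ideal.span_le, Set.singleton_subset_iff]
    rw [SetLike.mem_coe, RingHom.mem_ker]
    show T' (∑ g : DihedralGroup p, MonoidAlgebra.of (ZMod 2) (DihedralGroup p) g) = 0
    rw [hchar]
    constructor
    · rw [Finset.sum_congr rfl (fun gg _ => hGc gg), Finset.sum_const, Finset.card_univ,
        DihedralGroup.card, nsmul_eq_mul, mul_one]
      push_cast
      rw [show ((2:ZMod 2)) = 0 from rfl, zero_mul]
    · intro i
      have hgeom : ∀ z : (AlgebraicClosure (ZMod 2)), IsPrimitiveRoot z p → ∑ j : ZMod p, z ^ j.val = 0 := by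
        intro z hz
        rw [stmt12_zmod_sum (f := fun n => z ^ n)]
        exact hz.geom_sum_eq_zero (lt_trans one_lt_two hp3)
      have hg1 := hgeom (γ i) (hγ i)
      have hg2 := hgeom ((γ i)⁻¹) (hγ i).inv
      refine stmt12_entries' ?_ ?_ ?_ ?_ <;>
        · simp only [hGc, _root_.map_one, one_mul]
          first | exact hg1 | exact hg2
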